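/- For every n ≥ 0, x_{n+3} = x_1^{-n-1} x_2^{-n} ( x_2^{2(n+1)} + Σ_{q+r ≤ n} C(n-r, q) C(n+1-q, r) x_1^{2q} x_2^{2r} ), where C denotes the binomial coefficient. -/

import Mathlib

noncomputable abbrev K : Type := FractionRing (MvPolynomial (Fin 2) ℚ)

noncomputable def X1 : K := algebraMap (MvPolynomial (Fin 2) ℚ) K (MvPolynomial.X 0)

noncomputable def X2 : K := algebraMap (MvPolynomial (Fin 2) ℚ) K (MvPolynomial.X 1)

namespace XnAux

lemma X1_ne : X1 ≠ 0 := by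
  simp [X1, IsFractionRing.to_map_eq_zero_iff, MvPolynomial.X_ne_zero]

lemma X2_ne : X2 ≠ 0 := by
  simp [X2, IsFractionRing.to_map_eq_zero_iff, MvPolynomial.X_ne_zero]

lemma addSmul (a b : ℚ) (z : K) : (a + b) • z = a • z + b • z := add_smul a b z
lemma subSmul (a b : ℚ) (z : K) : (a - b) • z = a • z - b • z := sub_smul a b z
lemma zeroSmul (z : K) : (0 : ℚ) • z = 0 := zero_smul ℚ z
lemma oneSmul (z : K) : (1 : ℚ) • z = z := one_smul ℚ z
lemma mulSmulComm (a : ℚ) (z w : K) : z * (a • w) = a • (z * w) := mul_smul_comm a z w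
lemma smulCongr (a : ℚ) {z w : K} (h : z = w) : a • z = a • w := by rw [h]

def c (n q r : ℕ) : ℚ := ((n - r).choose q * (n + 1 - q).choose r : ℚ)

lemma c_zero {n q r : ℕ} (h : n + 1 ≤ q + r) (h2 : ¬ (q = 0 ∧ r = n + 1)) : c n q r = 0 := by
  unfold c
  rcases le_or_gt r n with hr | hr
  · have : n - r < q := by omega
    rw [Nat.choose_eq_zero_of_lt this]; push_cast; ring
  · rcases Nat.eq_zero_or_pos q with hq | hq
    · subst hq
      have : n + 1 - 0 < r := by omega
      rw [Nat.choose_eq_zero_of_lt this]; push_cast; ring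
    · have hnr : n - r = 0 := by omega
      rw [hnr, Nat.choose_eq_zero_of_lt hq]; push_cast; ring

lemma key (n q r : ℕ) :
    c (n+2) q r = c (n+1) q r + (if q = 0 then 0 else c (n+1) (q-1) r)
      + (if r = 0 then 0 else c (n+1) q (r-1))
      - (if q = 0 ∨ r = 0 then 0 else c n (q-1) (r-1)) := by
  rcases Nat.eq_zero_or_pos q with hq | hq
  · subst hq
    rcases Nat.eq_zero_or_pos r with hr | hr
    · subst hr; simp [c]
    · obtain ⟨r', rfl⟩ : ∃ r', r = r' + 1 := ⟨r - 1, by omega⟩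
      simp only [c, if_pos rfl, if_neg (by omega : ¬ r' + 1 = 0), true_or, if_pos,
        Nat.add_sub_cancel, Nat.choose_zero_right]
      rw [show n + 2 + 1 - 0 = (n + 2) + 1 by omega, show n + 1 + 1 - 0 = n + 2 by omega,
        Nat.choose_succ_succ (n + 2) r']
      push_cast; ring
  · obtain ⟨q', rfl⟩ : ∃ q', q = q' + 1 := ⟨q - 1, by omega⟩
    rcases Nat.eq_zero_or_pos r with hr | hr
    · subst hr
      simp only [c, if_neg (by omega : ¬ q' + 1 = 0), if_pos rfl, or_true, if_pos,
        Nat.add_sub_cancel, Nat.choose_zero_right, Nat.sub_zero]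
      rw [Nat.choose_succ_succ (n + 1) q']
      push_cast; ring
    · obtain ⟨r', rfl⟩ : ∃ r', r = r' + 1 := ⟨r - 1, by omega⟩
      simp only [c, if_neg (by omega : ¬ q' + 1 = 0), if_neg (by omega : ¬ r' + 1 = 0),
        if_neg (by omega : ¬ (q' + 1 = 0 ∨ r' + 1 = 0)), Nat.add_sub_cancel]
      rw [show n + 2 - (r' + 1) = n + 1 - r' by omega,
          show n + 2 + 1 - (q' + 1) = n + 2 - q' by omega,
          show n + 1 - (r' + 1) = n - r' by omega,
          show n + 1 + 1 - (q' + 1) = n + 1 - q' by omega,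
          show n + 1 + 1 - q' = n + 2 - q' by omega,
          show n + 1 - q' = n + 1 - q' from rfl]
      rcases le_or_gt r' n with hr' | hr'
      · rcases le_or_gt q' (n + 1) with hq' | hq'
        · rw [show n + 1 - r' = (n - r') + 1 by omega, show n + 2 - q' = (n + 1 - q') + 1 by omega,
            Nat.choose_succ_succ (n - r') q', Nat.choose_succ_succ (n + 1 - q') r']
          push_cast; ring
        · rw [show n + 1 - q' = 0 by omega, show n + 2 - q' = 0 by omega,
            Nat.choose_eq_zero_of_lt (by omega : 0 < r' + 1)]
          rcases Nat.eq_zero_or_pos r' with h0 | h0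
          · subst h0
            rw [Nat.choose_eq_zero_of_lt (by omega : n - 0 < q'),
              Nat.choose_eq_zero_of_lt (by omega : n + 1 - 0 < q' + 1)]
            push_cast; ring
          · rw [Nat.choose_eq_zero_of_lt (h0 : 0 < r')]
            push_cast; ring
      · rw [show n + 1 - r' = 0 by omega, show n - r' = 0 by omega,
          Nat.choose_eq_zero_of_lt (by omega : 0 < q' + 1)]
        rcases Nat.eq_zero_or_pos q' with h0 | h0
        · subst h0
          rw [show n + 2 - 0 = n + 2 by omega, show n + 1 - 0 = n + 1 by omega]
          rcases eq_or_lt_of_le (Nat.succ_le_of_lt hr') with h1 | h1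
          · subst h1
            simp only [Nat.succ_eq_add_one]
            rw [show n + 1 + 1 = n + 2 by omega]
            simp [Nat.choose_self]
          · rw [Nat.choose_eq_zero_of_lt (by omega : n + 2 < r' + 1),
              Nat.choose_eq_zero_of_lt (by omega : n + 1 < r')]
            push_cast; ring
        · rw [Nat.choose_eq_zero_of_lt (h0 : 0 < q')]
          push_cast; ring

noncomputable def Ssum (N n : ℕ) : K :=
  ∑ q ∈ Finset.range N, ∑ r ∈ Finset.range N, c n q r • (X1 ^ (2 * q) * X2 ^ (2 * r))

lemma Ssum_eq_prod (N n : ℕ) : Ssum N n =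
    ∑ p ∈ Finset.range N ×ˢ Finset.range N, c n p.1 p.2 • (X1 ^ (2 * p.1) * X2 ^ (2 * p.2)) := by
  rw [Finset.sum_product]; rfl

lemma Ssum_indep {n N M : ℕ} (h1 : n + 2 ≤ N) (h2 : N ≤ M) : Ssum M n = Ssum N n := by
  rw [Ssum_eq_prod, Ssum_eq_prod]
  symm
  apply Finset.sum_subset
  · exact Finset.product_subset_product (Finset.range_subset_range.2 h2) (Finset.range_subset_range.2 h2)
  · intro p hp hnp
    simp only [Finset.mem_product, Finset.mem_range] at hp hnp
    have hz : c n p.1 p.2 = 0 := c_zero (by omega) (by omega)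
    rw [hz]; exact zero_smul ℚ (X1 ^ (2 * p.1) * X2 ^ (2 * p.2))

lemma B_eq (n : ℕ) :
    (∑ q ∈ Finset.range (n + 5), ∑ r ∈ Finset.range (n + 5),
      (if q = 0 then (0 : ℚ) else c (n + 1) (q - 1) r) • (X1 ^ (2 * q) * X2 ^ (2 * r)))
    = X1 ^ 2 * Ssum (n + 4) (n + 1) := by
  rw [show n + 5 = n + 4 + 1 by omega, Finset.sum_range_succ']
  have h0 : (∑ r ∈ Finset.range (n + 4 + 1),
      (if (0 : ℕ) = 0 then (0 : ℚ) else c (n + 1) (0 - 1) r) • (X1 ^ (2 * 0) * X2 ^ (2 * r))) = 0 :=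
    Finset.sum_eq_zero fun r _ => by rw [if_pos rfl]; exact zeroSmul _
  rw [h0, add_zero, Ssum, Finset.mul_sum]
  refine Finset.sum_congr rfl fun i hi => ?_
  rw [Finset.mul_sum, Finset.sum_range_succ]
  have hc : c (n + 1) (i + 1 - 1) (n + 4) = 0 := c_zero (by omega) (by omega)
  rw [if_neg (by omega : ¬ i + 1 = 0), hc, zeroSmul, add_zero]
  refine Finset.sum_congr rfl fun r hr => ?_
  rw [if_neg (by omega : ¬ i + 1 = 0), show i + 1 - 1 = i by omega, mulSmulComm]
  exact smulCongr _ (by ring)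

lemma C_eq (n : ℕ) :
    (∑ q ∈ Finset.range (n + 5), ∑ r ∈ Finset.range (n + 5),
      (if r = 0 then (0 : ℚ) else c (n + 1) q (r - 1)) • (X1 ^ (2 * q) * X2 ^ (2 * r)))
    = X2 ^ 2 * Ssum (n + 4) (n + 1) := by
  rw [show n + 5 = n + 4 + 1 by omega, Finset.sum_range_succ]
  have hlast : (∑ r ∈ Finset.range (n + 4 + 1),
      (if r = 0 then (0 : ℚ) else c (n + 1) (n + 4) (r - 1)) •
        (X1 ^ (2 * (n + 4)) * X2 ^ (2 * r))) = 0 := by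
    refine Finset.sum_eq_zero fun r hr => ?_
    rcases Nat.eq_zero_or_pos r with h | h
    · subst h; rw [if_pos rfl]; exact zeroSmul _
    · rw [if_neg (by omega : ¬ r = 0), c_zero (n := n + 1) (by omega) (by omega)]
      exact zeroSmul _
  rw [hlast, add_zero, Ssum, Finset.mul_sum]
  refine Finset.sum_congr rfl fun q hq => ?_
  rw [Finset.mul_sum, Finset.sum_range_succ']
  have h0 : (if (0 : ℕ) = 0 then (0 : ℚ) else c (n + 1) q (0 - 1)) •
      (X1 ^ (2 * q) * X2 ^ (2 * 0)) = 0 := by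
    rw [if_pos rfl]; exact zeroSmul _
  rw [h0, add_zero]
  refine Finset.sum_congr rfl fun r hr => ?_
  rw [if_neg (by omega : ¬ r + 1 = 0), show r + 1 - 1 = r by omega, mulSmulComm]
  exact smulCongr _ (by ring)

lemma D_eq (n : ℕ) :
    (∑ q ∈ Finset.range (n + 5), ∑ r ∈ Finset.range (n + 5),
      (if q = 0 ∨ r = 0 then (0 : ℚ) else c n (q - 1) (r - 1)) • (X1 ^ (2 * q) * X2 ^ (2 * r)))
    = X1 ^ 2 * X2 ^ 2 * Ssum (n + 4) n := by
  rw [show n + 5 = n + 4 + 1 by omega, Finset.sum_range_succ']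
  have h0 : (∑ r ∈ Finset.range (n + 4 + 1),
      (if (0 : ℕ) = 0 ∨ r = 0 then (0 : ℚ) else c n (0 - 1) (r - 1)) •
        (X1 ^ (2 * 0) * X2 ^ (2 * r))) = 0 :=
    Finset.sum_eq_zero fun r _ => by rw [if_pos (Or.inl rfl)]; exact zeroSmul _
  rw [h0, add_zero, Ssum, Finset.mul_sum]
  refine Finset.sum_congr rfl fun q hq => ?_
  rw [Finset.mul_sum, Finset.sum_range_succ']
  have h1 : (if q + 1 = 0 ∨ (0 : ℕ) = 0 then (0 : ℚ) else c n (q + 1 - 1) (0 - 1)) •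
      (X1 ^ (2 * (q + 1)) * X2 ^ (2 * 0)) = 0 := by
    rw [if_pos (Or.inr rfl)]; exact zeroSmul _
  rw [h1, add_zero]
  refine Finset.sum_congr rfl fun r hr => ?_
  rw [if_neg (by omega : ¬ (q + 1 = 0 ∨ r + 1 = 0)), show q + 1 - 1 = q by omega,
    show r + 1 - 1 = r by omega, mulSmulComm]
  exact smulCongr _ (by ring)

lemma Ssum_rec (n : ℕ) :
    Ssum (n + 5) (n + 2) = (X1 ^ 2 + X2 ^ 2 + 1) * Ssum (n + 4) (n + 1)
      - X1 ^ 2 * X2 ^ 2 * Ssum (n + 4) n := by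
  have expand : Ssum (n + 5) (n + 2)
      = ((Ssum (n + 5) (n + 1)
        + ∑ q ∈ Finset.range (n + 5), ∑ r ∈ Finset.range (n + 5),
            (if q = 0 then (0 : ℚ) else c (n + 1) (q - 1) r) • (X1 ^ (2 * q) * X2 ^ (2 * r)))
        + ∑ q ∈ Finset.range (n + 5), ∑ r ∈ Finset.range (n + 5),
            (if r = 0 then (0 : ℚ) else c (n + 1) q (r - 1)) • (X1 ^ (2 * q) * X2 ^ (2 * r)))
        - ∑ q ∈ Finset.range (n + 5), ∑ r ∈ Finset.range (n + 5),
            (if q = 0 ∨ r = 0 then (0 : ℚ) else c n (q - 1) (r - 1)) •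
              (X1 ^ (2 * q) * X2 ^ (2 * r)) := by
    unfold Ssum
    rw [Finset.sum_congr rfl fun q _ => Finset.sum_congr rfl fun r _ => by
      rw [key, subSmul, addSmul, addSmul]]
    simp only [Finset.sum_sub_distrib, Finset.sum_add_distrib]
  rw [expand, B_eq, C_eq, D_eq,
    Ssum_indep (show n + 1 + 2 ≤ n + 4 by omega) (show n + 4 ≤ n + 5 by omega)]
  ring

lemma Ssum_rec' (n : ℕ) :
    Ssum (n + 4) (n + 2) = (X1 ^ 2 + X2 ^ 2 + 1) * Ssum (n + 3) (n + 1)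
      - X1 ^ 2 * X2 ^ 2 * Ssum (n + 2) n := by
  rw [← Ssum_indep (show n + 2 + 2 ≤ n + 4 by omega) (show n + 4 ≤ n + 5 by omega), Ssum_rec,
    Ssum_indep (show n + 1 + 2 ≤ n + 3 by omega) (show n + 3 ≤ n + 4 by omega),
    Ssum_indep (show n + 2 ≤ n + 2 by omega) (show n + 2 ≤ n + 4 by omega)]

lemma Ssum_tri (n : ℕ) : Ssum (n + 2) n
    = X2 ^ (2 * (n + 1)) +
      ∑ q ∈ Finset.range (n + 1), ∑ r ∈ Finset.range (n + 1 - q),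
        c n q r • (X1 ^ (2 * q) * X2 ^ (2 * r)) := by
  unfold Ssum
  rw [show n + 2 = n + 1 + 1 by omega, Finset.sum_range_succ']
  have h0 : (∑ r ∈ Finset.range (n + 1 + 1), c n 0 r • (X1 ^ (2 * 0) * X2 ^ (2 * r)))
      = (∑ r ∈ Finset.range (n + 1), c n 0 r • (X1 ^ (2 * 0) * X2 ^ (2 * r)))
        + X2 ^ (2 * (n + 1)) := by
    rw [Finset.sum_range_succ]
    congr 1
    have h1 : c n 0 (n + 1) = 1 := by
      simp [c, Nat.choose_zero_right, Nat.choose_self]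
    rw [h1, oneSmul]
    ring
  rw [h0]
  have hP : (∑ i ∈ Finset.range (n + 1), ∑ r ∈ Finset.range (n + 1 + 1),
        c n (i + 1) r • (X1 ^ (2 * (i + 1)) * X2 ^ (2 * r)))
      = ∑ i ∈ Finset.range (n + 1), ∑ r ∈ Finset.range (n + 1 - (i + 1)),
        c n (i + 1) r • (X1 ^ (2 * (i + 1)) * X2 ^ (2 * r)) := by
    refine Finset.sum_congr rfl fun i hi => ?_
    symm
    refine Finset.sum_subset (Finset.range_subset_range.2 (by omega)) fun r hr hnr => ?_
    simp only [Finset.mem_range] at hr hnr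
    rw [c_zero (by omega) (by omega)]
    exact zeroSmul _
  rw [hP]
  conv_rhs => rw [Finset.sum_range_succ']
  rw [Finset.sum_range_succ (fun i => ∑ r ∈ Finset.range (n + 1 - (i + 1)),
    c n (i + 1) r • (X1 ^ (2 * (i + 1)) * X2 ^ (2 * r)))]
  rw [show n + 1 - (n + 1) = 0 by omega, Finset.sum_range_zero, add_zero]
  simp only [Nat.sub_zero]
  ring

end XnAux

set_option maxHeartbeats 1000000 in
open XnAux in
theorem xn_formula (x : ℤ → K) (hx1 : x 1 = X1) (hx2 : x 2 = X2)
    (hxnz : ∀ m : ℤ, x m ≠ 0)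
    (hrec : ∀ m : ℤ, x (m - 1) * x (m + 1) = x m ^ 2 + 1) :
    ∀ n : ℕ, x ((n : ℤ) + 3) =
      X1⁻¹ ^ (n + 1) * X2⁻¹ ^ n *
        (X2 ^ (2 * (n + 1)) +
          ∑ q ∈ Finset.range (n + 1), ∑ r ∈ Finset.range (n + 1 - q),
            ((n - r).choose q * (n + 1 - q).choose r : ℚ) • (X1 ^ (2 * q) * X2 ^ (2 * r))) := by
  have hX1 := X1_ne
  have hX2 := X2_ne
  have h2 := hrec 2
  norm_num at h2
  rw [hx1, hx2] at h2
  -- h2 : X1 * x 3 = X2 ^ 2 + 1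
  have lin : ∀ k : ℕ, (x ((k : ℤ) + 3) + x ((k : ℤ) + 1)) * (X1 * X2)
      = (X1 ^ 2 + X2 ^ 2 + 1) * x ((k : ℤ) + 2) := by
    intro k
    induction k with
    | zero =>
      norm_num
      rw [hx1, hx2]
      linear_combination X2 * h2
    | succ k ih =>
      have h1 := hrec ((k : ℤ) + 2)
      rw [show (k : ℤ) + 2 - 1 = (k : ℤ) + 1 by ring,
        show (k : ℤ) + 2 + 1 = (k : ℤ) + 3 by ring] at h1
      have h2' := hrec ((k : ℤ) + 3)
      rw [show (k : ℤ) + 3 - 1 = (k : ℤ) + 2 by ring,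
        show (k : ℤ) + 3 + 1 = (k : ℤ) + 4 by ring] at h2'
      have hc1 : ((k + 1 : ℕ) : ℤ) = (k : ℤ) + 1 := by push_cast; ring
      rw [hc1, show (k : ℤ) + 1 + 3 = (k : ℤ) + 4 by ring,
        show (k : ℤ) + 1 + 1 = (k : ℤ) + 2 by ring,
        show (k : ℤ) + 1 + 2 = (k : ℤ) + 3 by ring]
      have hnz := hxnz ((k : ℤ) + 2)
      refine mul_right_cancel₀ hnz ?_
      linear_combination (X1 * X2) * h2' + x ((k : ℤ) + 3) * ih - (X1 * X2) * h1
  suffices h : ∀ n : ℕ, x ((n : ℤ) + 3) * (X1 ^ (n + 1) * X2 ^ n) = Ssum (n + 2) n by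
    intro n
    have hgoal := h n
    have e : x ((n : ℤ) + 3)
        = X1⁻¹ ^ (n + 1) * X2⁻¹ ^ n * (x ((n : ℤ) + 3) * (X1 ^ (n + 1) * X2 ^ n)) := by
      rw [inv_pow, inv_pow]
      field_simp
    rw [e, hgoal, Ssum_tri n]
    simp only [c]
  intro n
  induction n using Nat.twoStepInduction with
  | zero =>
    have hS : Ssum 2 0 = 1 + X2 ^ 2 := by
      norm_num [Ssum, Finset.sum_range_succ, c, oneSmul, zeroSmul]
    norm_num [hS]
    linear_combination h2
  | one =>
    have hS : Ssum 3 1 = 1 + X1 ^ 2 + (2 : ℚ) • X2 ^ 2 + X2 ^ 4 := by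
      norm_num [Ssum, Finset.sum_range_succ, c, oneSmul, zeroSmul]
      abel
    have h2smul : (2 : ℚ) • (X2 ^ 2 : K) = X2 ^ 2 + X2 ^ 2 := two_smul ℚ (X2 ^ 2 : K)
    have hl := lin 1
    norm_num at hl
    rw [hx2] at hl
    norm_num [hS, h2smul]
    linear_combination X1 * hl + (X1 ^ 2 + X2 ^ 2 + 1) * h2
  | more n ih ih1 =>
    have hc2 : ((n + 2 : ℕ) : ℤ) = (n : ℤ) + 2 := by push_cast; ring
    have hc1 : ((n + 1 : ℕ) : ℤ) = (n : ℤ) + 1 := by push_cast; ring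
    rw [hc2, show (n : ℤ) + 2 + 3 = (n : ℤ) + 5 by ring]
    rw [hc1, show (n : ℤ) + 1 + 3 = (n : ℤ) + 4 by ring] at ih1
    have hl := lin (n + 2)
    rw [hc2, show (n : ℤ) + 2 + 3 = (n : ℤ) + 5 by ring,
      show (n : ℤ) + 2 + 1 = (n : ℤ) + 3 by ring,
      show (n : ℤ) + 2 + 2 = (n : ℤ) + 4 by ring] at hl
    rw [show n + 2 + 2 = n + 4 by omega, Ssum_rec' n, ← ih1, ← ih]
    linear_combination (X1 ^ (n + 2) * X2 ^ (n + 1)) * hl
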